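/- Let A, B, C, D be real numbers with B ≠ 0, B·D ≥ 0 and B·C > 0, and let δ⁺ = -A + √(A² + B·C), δ⁻ = -A - √(A² + B·C). Then the function ρ defined on [0,T] by ρ(t) = (C·(1 - e^{-(δ⁺-δ⁻)(T-t)}) + D·(δ⁺ - δ⁻·e^{-(δ⁺-δ⁻)(T-t)})) / (B·D·(1 - e^{-(δ⁺-δ⁻)(T-t)}) + δ⁺·e^{-(δ⁺-δ⁻)(T-t)} - δ⁻) is well defined (the denominator never vanishes) and satisfies the scalar Riccati equation ρ'(t) - B·ρ(t)² - 2A·ρ(t) + C = 0 on [0,T] with terminal condition ρ(T) = D. -/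

import Mathlib

open Real Set

set_option maxHeartbeats 2000000

lemma aux_div (A B C n g : ℝ) (hg : g ≠ 0) :
    (B * n ^ 2 + 2 * A * (n * g) - C * g ^ 2) / g ^ 2 =
      B * (n / g) ^ 2 + 2 * A * (n / g) - C := by
  field_simp


theorem stmt_0 (T A B C D : ℝ) (hT : 0 < T) (hB : B ≠ 0) (hBD : 0 ≤ B * D)
    (hBC : 0 < B * C)
    (δp δm : ℝ) (hδp : δp = -A + Real.sqrt (A ^ 2 + B * C))
    (hδm : δm = -A - Real.sqrt (A ^ 2 + B * C))
    (ρ : ℝ → ℝ)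
    (hρ : ∀ t, ρ t =
      (C * (1 - Real.exp (-(δp - δm) * (T - t))) +
        D * (δp - δm * Real.exp (-(δp - δm) * (T - t)))) /
      (B * D * (1 - Real.exp (-(δp - δm) * (T - t))) +
        δp * Real.exp (-(δp - δm) * (T - t)) - δm)) :
    (∀ t ∈ Icc (0 : ℝ) T,
        B * D * (1 - Real.exp (-(δp - δm) * (T - t))) +
          δp * Real.exp (-(δp - δm) * (T - t)) - δm ≠ 0) ∧
    (∀ t ∈ Icc (0 : ℝ) T, HasDerivAt ρ (B * ρ t ^ 2 + 2 * A * ρ t - C) t) ∧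
    ρ T = D := by
  have hs0 : 0 < A ^ 2 + B * C := by positivity
  set s := Real.sqrt (A ^ 2 + B * C) with hs_def
  have hs2 : s ^ 2 = A ^ 2 + B * C := Real.sq_sqrt hs0.le
  have hs : 0 < s := Real.sqrt_pos.mpr hs0
  have hk : δp - δm = 2 * s := by rw [hδp, hδm]; ring
  have hδm_neg : δm < 0 := by nlinarith
  have hδp_pos : 0 < δp := by nlinarith
  -- positivity of the denominator
  have hgpos : ∀ t ∈ Icc (0 : ℝ) T,
      0 < B * D * (1 - Real.exp (-(δp - δm) * (T - t))) +
        δp * Real.exp (-(δp - δm) * (T - t)) - δm := by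
    intro t ht
    have hE1 : Real.exp (-(δp - δm) * (T - t)) ≤ 1 := by
      rw [Real.exp_le_one_iff]
      have : 0 ≤ T - t := by linarith [ht.2]
      nlinarith
    have hE0 : 0 < Real.exp (-(δp - δm) * (T - t)) := Real.exp_pos _
    nlinarith [mul_nonneg hBD (by linarith : (0:ℝ) ≤ 1 - Real.exp (-(δp - δm) * (T - t)))]
  refine ⟨fun t ht => (hgpos t ht).ne', fun t ht => ?_, ?_⟩
  · -- derivative
    have hρfun : ρ = fun u =>
        (C * (1 - Real.exp (-(δp - δm) * (T - u))) +
          D * (δp - δm * Real.exp (-(δp - δm) * (T - u)))) /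
        (B * D * (1 - Real.exp (-(δp - δm) * (T - u))) +
          δp * Real.exp (-(δp - δm) * (T - u)) - δm) := funext hρ
    set k := δp - δm with hkdef
    have hE : HasDerivAt (fun u : ℝ => Real.exp (-k * (T - u)))
        (k * Real.exp (-k * (T - t))) t := by
      have h1 : HasDerivAt (fun u : ℝ => -k * (T - u)) k t := by
        have := ((hasDerivAt_id t).const_sub T).const_mul (-k)
        exact this.congr_deriv (by ring)
      simpa [mul_comm] using h1.exp
    set Et := Real.exp (-k * (T - t)) with hEt
    have h2 : HasDerivAt (fun u : ℝ => 1 - Real.exp (-k * (T - u))) (-(k * Et)) t :=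
      hE.const_sub 1
    have hN : HasDerivAt (fun u : ℝ =>
        C * (1 - Real.exp (-k * (T - u))) + D * (δp - δm * Real.exp (-k * (T - u))))
        (C * (-(k * Et)) + D * (-(δm * (k * Et)))) t :=
      (h2.const_mul C).add ((hE.const_mul δm).const_sub δp |>.const_mul D)
    have hG : HasDerivAt (fun u : ℝ =>
        B * D * (1 - Real.exp (-k * (T - u))) + δp * Real.exp (-k * (T - u)) - δm)
        (B * D * (-(k * Et)) + δp * (k * Et)) t :=
      ((h2.const_mul (B * D)).add (hE.const_mul δp)).sub_const δm
    have hgne : B * D * (1 - Et) + δp * Et - δm ≠ 0 := (hgpos t ht).ne'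
    have hdiv := hN.div hG hgne
    rw [hρfun]
    refine hdiv.congr_deriv ?_
    rw [show Real.exp (-k * (T - t)) = Et from rfl]
    have key : (C * -(k * Et) + D * -(δm * (k * Et))) * (B * D * (1 - Et) + δp * Et - δm) -
        (C * (1 - Et) + D * (δp - δm * Et)) * (B * D * -(k * Et) + δp * (k * Et)) =
        B * (C * (1 - Et) + D * (δp - δm * Et)) ^ 2 +
          2 * A * ((C * (1 - Et) + D * (δp - δm * Et)) * (B * D * (1 - Et) + δp * Et - δm)) -
          C * (B * D * (1 - Et) + δp * Et - δm) ^ 2 := by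
      rw [hkdef, hδp, hδm]
      linear_combination ((C - B * D ^ 2 - 2 * A * D) * (1 - Et) ^ 2) * hs2
    rw [key, aux_div A B C _ _ hgne]
  · rw [hρ T]
    have hne : δp - δm ≠ 0 := by rw [hk]; positivity
    simp only [sub_self, mul_zero, Real.exp_zero, zero_add]
    field_simp
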